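/- Let F = F(a,b) be the free group of rank 2 on free generators a, b, and let G = F × ℤ. Let H be the subgroup of G generated by the two elements (a, 0) and (b, 1). Then the intersection of H with F × {0} (equivalently, with the kernel of the projection G → ℤ) is not finitely generated. -/

import Mathlib

noncomputable section NotFG

open SemidirectProduct

abbrev Z0 : Type := Multiplicative (ℤ →₀ ℤ)

def shiftAut (n : ℤ) : MulAut Z0 :=
  AddEquiv.toMultiplicative (Finsupp.domCongr (Equiv.addRight n))

lemma shiftAut_apply (n : ℤ) (x : Z0) (k : ℤ) :
    Multiplicative.toAdd (shiftAut n x) k = Multiplicative.toAdd x (k - n) := by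
  show (Finsupp.equivMapDomain (Equiv.addRight n) (Multiplicative.toAdd x)) k
      = Multiplicative.toAdd x (k - n)
  simp [Finsupp.equivMapDomain_apply, sub_eq_add_neg]

def shiftφ : Multiplicative ℤ →* MulAut Z0 where
  toFun n := shiftAut n.toAdd
  map_one' := by
    ext x : 1
    refine Multiplicative.toAdd.injective (Finsupp.ext fun k => ?_)
    show Multiplicative.toAdd (shiftAut 0 x) k = Multiplicative.toAdd x k
    rw [shiftAut_apply]
    norm_num
  map_mul' m n := by
    ext x : 1
    refine Multiplicative.toAdd.injective (Finsupp.ext fun k => ?_)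
    show Multiplicative.toAdd (shiftAut (m.toAdd + n.toAdd) x) k
        = Multiplicative.toAdd (shiftAut m.toAdd (shiftAut n.toAdd x)) k
    rw [shiftAut_apply, shiftAut_apply, shiftAut_apply]
    congr 1
    omega

abbrev W : Type := Z0 ⋊[shiftφ] Multiplicative ℤ

def fW : FreeGroup Bool →* W :=
  FreeGroup.lift (fun x => if x then inl (Multiplicative.ofAdd (Finsupp.single 0 1))
    else inr (Multiplicative.ofAdd 1))

lemma fW_a : fW (FreeGroup.of true) = inl (Multiplicative.ofAdd (Finsupp.single 0 1)) := by
  simp [fW]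

lemma fW_b : fW (FreeGroup.of false) = inr (Multiplicative.ofAdd 1) := by
  simp [fW]

lemma shiftφ_apply (n : ℤ) (x : ℤ →₀ ℤ) (k : ℤ) :
    Multiplicative.toAdd (shiftφ (Multiplicative.ofAdd n) (Multiplicative.ofAdd x)) k
      = x (k - n) := by
  show Multiplicative.toAdd (shiftAut n (Multiplicative.ofAdd x)) k = x (k - n)
  rw [shiftAut_apply]
  rfl

lemma key_elt (n : ℤ) :
    fW (FreeGroup.of false ^ n * FreeGroup.of true * FreeGroup.of false ^ (-n))
      = inl (shiftφ (Multiplicative.ofAdd n) (Multiplicative.ofAdd (Finsupp.single 0 1))) := by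
  rw [inl_aut]
  rw [map_mul, map_mul, map_zpow, fW_a, fW_b, ← map_zpow, ← ofAdd_zsmul]
  rw [show FreeGroup.of false ^ (-n) = (FreeGroup.of false ^ n)⁻¹ by group,
    map_inv, map_zpow, fW_b, ← map_zpow, ← ofAdd_zsmul]
  simp

def QN (N : ℤ) : Subgroup W where
  carrier := {x | x.right = 1 ∧ Multiplicative.toAdd x.left N = 0}
  one_mem' := ⟨rfl, by simp⟩
  mul_mem' := by
    rintro x y ⟨hx1, hx2⟩ ⟨hy1, hy2⟩
    refine ⟨by simp [hx1, hy1], ?_⟩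
    rw [SemidirectProduct.mul_left, hx1, map_one]
    show Multiplicative.toAdd (x.left * y.left) N = 0
    rw [toAdd_mul]
    simp [hx2, hy2]
  inv_mem' := by
    rintro x ⟨hx1, hx2⟩
    refine ⟨by simp [hx1], ?_⟩
    rw [SemidirectProduct.inv_left, hx1, inv_one, map_one]
    show Multiplicative.toAdd (x.left⁻¹) N = 0
    rw [toAdd_inv]
    simp [hx2]

end NotFG

/-- Let `F = F(a,b)` be the free group of rank 2 (on generators `a = of true`,
`b = of false`) and `G = F × ℤ`. Let `H ≤ G` be the subgroup generated by `(a, 0)` and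
`(b, 1)`. Then the intersection of `H` with `F × {0}` (the kernel of the projection
`G → ℤ`) is not finitely generated. -/
theorem intersection_not_fg :
    ¬ Subgroup.FG
        ((Subgroup.closure
            {(FreeGroup.of true, (1 : Multiplicative ℤ)),
             (FreeGroup.of false, Multiplicative.ofAdd (1 : ℤ))} ⊓
          MonoidHom.ker (MonoidHom.snd (FreeGroup Bool) (Multiplicative ℤ)))) := by
  classical
  set ga : FreeGroup Bool × Multiplicative ℤ := (FreeGroup.of true, 1) with hga
  set gb : FreeGroup Bool × Multiplicative ℤ :=
    (FreeGroup.of false, Multiplicative.ofAdd (1 : ℤ)) with hgb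
  set K : Subgroup (FreeGroup Bool × Multiplicative ℤ) :=
    Subgroup.closure {ga, gb} ⊓ MonoidHom.ker (MonoidHom.snd _ _) with hK
  -- the comparison homomorphism
  set ρ : (FreeGroup Bool × Multiplicative ℤ) →* Multiplicative ℤ :=
    ((SemidirectProduct.rightHom.comp fW).comp (MonoidHom.fst _ _)) /
      MonoidHom.snd _ _ with hρ
  have hHker : Subgroup.closure {ga, gb} ≤ ρ.ker := by
    rw [Subgroup.closure_le]
    rintro g (rfl | rfl)
    · simp [hρ, MonoidHom.mem_ker, fW_a, hga]
    · simp [hρ, MonoidHom.mem_ker, fW_b, hgb]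
  have hKfact : ∀ g ∈ K, SemidirectProduct.rightHom (fW g.1) = 1 ∧ g.2 = 1 := by
    rintro g ⟨hg1, hg2⟩
    have h2 : g.2 = 1 := hg2
    have h1 := hHker hg1
    rw [MonoidHom.mem_ker, hρ] at h1
    simp only [MonoidHom.div_apply, MonoidHom.comp_apply, MonoidHom.coe_fst,
      MonoidHom.coe_snd, h2, div_one] at h1
    exact ⟨h1, h2⟩
  rintro ⟨S, hS⟩
  -- pick N avoiding all supports
  obtain ⟨N, hN⟩ := Infinite.exists_notMem_finset
    (S.sup fun g => (Multiplicative.toAdd (fW g.1).left).support)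
  -- K is contained in the comap of QN N
  have hKP : K ≤ (QN N).comap (fW.comp (MonoidHom.fst _ _)) := by
    rw [← hS, Subgroup.closure_le]
    intro g hg
    have hgK : g ∈ K := by rw [← hS]; exact Subgroup.subset_closure hg
    obtain ⟨h1, _⟩ := hKfact g hgK
    refine ⟨h1, ?_⟩
    have : N ∉ (Multiplicative.toAdd (fW g.1).left).support := fun hmem =>
      hN (Finset.le_sup (f := fun g => (Multiplicative.toAdd (fW g.1).left).support) hg hmem)
    simpa [Finsupp.notMem_support_iff] using this
  -- the contradiction element
  set x : FreeGroup Bool × Multiplicative ℤ :=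
    (FreeGroup.of false ^ N * FreeGroup.of true * FreeGroup.of false ^ (-N), 1) with hx
  have hxK : x ∈ K := by
    constructor
    · have hmem : x = gb ^ N * ga * gb ^ (-N) := by
        rw [hx, hga, hgb]
        ext
        · simp
        · simp
      rw [hmem]
      exact mul_mem (mul_mem (zpow_mem (Subgroup.subset_closure (by simp)) N)
        (Subgroup.subset_closure (by simp)))
        (zpow_mem (Subgroup.subset_closure (by simp)) (-N))
    · show x.2 = 1
      rfl
  have hxP := hKP hxK
  obtain ⟨-, h0⟩ := hxP
  rw [show (fW.comp (MonoidHom.fst _ _)) x = fW x.1 from rfl, hx, key_elt] at h0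
  rw [SemidirectProduct.left_inl] at h0
  rw [shiftφ_apply, sub_self, Finsupp.single_eq_same] at h0
  exact one_ne_zero h0
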